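/- Let A be a commutative unital *-algebra over ℂ. Every nonzero hermitian multiplicative linear functional χ is an extreme point of the set P₁(A) of positive linear functionals f with f(1) = 1: if χ = t·f + (1−t)·g with f, g ∈ P₁(A) and 0 < t < 1, then f = g = χ. -/
import Mathlib


open scoped ComplexOrder

lemma pos_vanish_aux {A : Type*} [CommRing A] [Algebra ℂ A]
    [StarRing A] [StarModule ℂ A]
    (f : A →ₗ[ℂ] ℂ) (hfpos : ∀ y : A, 0 ≤ f (star y * y)) (hf1 : f 1 = 1)
    (y : A) (hy : f (star y * y) = 0) : f y = 0 := by
  have key : ∀ c : ℂ,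
      0 ≤ c * f (star y) + (starRingEnd ℂ c) * f y + c * (starRingEnd ℂ c) := by
    intro c
    have h := hfpos (y + c • 1)
    have expand : star (y + c • 1) * (y + c • 1)
        = star y * y + c • star y + (starRingEnd ℂ c) • y
          + (c * starRingEnd ℂ c) • (1 : A) := by
      simp only [star_add, star_smul, star_one, add_mul, mul_add, smul_mul_assoc,
        mul_smul_comm, mul_one, one_mul, smul_smul, RingHom.id_apply,
        smul_add, starRingEnd_apply]
      rw [mul_comm c (star c)]
      abel
    rw [expand] at h
    simpa [map_add, map_smul, hy, hf1, smul_eq_mul] using h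
  set a := f (star y) with ha
  set b := f y with hb
  -- imaginary parts
  have him1 : a.im + b.im = 0 := by
    have h := key 1
    rw [Complex.nonneg_iff] at h
    simpa using h.2.symm
  have him2 : a.re - b.re = 0 := by
    have h := key Complex.I
    rw [Complex.nonneg_iff] at h
    have := h.2.symm
    simp [Complex.add_im, Complex.mul_im, Complex.I_re, Complex.I_im,
      Complex.conj_re, Complex.conj_im] at this
    linarith
  have hre : ∀ r : ℝ, 0 ≤ r * (a.re + b.re) + r ^ 2 := by
    intro r
    have h := key r
    rw [Complex.nonneg_iff] at h
    have := h.1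
    simp [Complex.add_re, Complex.mul_re, Complex.conj_re, Complex.conj_im,
      Complex.ofReal_re, Complex.ofReal_im] at this
    nlinarith [this]
  have hre2 : ∀ r : ℝ, 0 ≤ r * (b.im - a.im) + r ^ 2 := by
    intro r
    have h := key ((r : ℂ) * Complex.I)
    rw [Complex.nonneg_iff] at h
    have := h.1
    simp [Complex.add_re, Complex.mul_re, Complex.mul_im, Complex.I_re,
      Complex.I_im, Complex.conj_re, Complex.conj_im, Complex.ofReal_re,
      Complex.ofReal_im] at this
    nlinarith [this]
  have hare : a.re = 0 := by
    have h := hre (-a.re)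
    have hb' : b.re = a.re := by linarith
    nlinarith [h]
  have haim : a.im = 0 := by
    have h := hre2 (a.im)
    have hb' : b.im = -a.im := by linarith
    nlinarith [h]
  have : b.re = 0 := by linarith
  have hbim : b.im = 0 := by linarith
  exact Complex.ext this hbim

set_option maxHeartbeats 1600000 in
/-- Every nonzero hermitian multiplicative linear functional is an extreme point of
the set `P₁(A)` of states. -/
theorem herm_char_extreme {A : Type*} [CommRing A] [Algebra ℂ A]
    [StarRing A] [StarModule ℂ A] (χ : A →ₗ[ℂ] ℂ) (hne : χ ≠ 0)
    (hmul : ∀ x y : A, χ (x * y) = χ x * χ y)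
    (hherm : ∀ x : A, χ (star x) = starRingEnd ℂ (χ x))
    (f g : A →ₗ[ℂ] ℂ)
    (hfpos : ∀ y : A, 0 ≤ f (star y * y)) (hf1 : f 1 = 1)
    (hgpos : ∀ y : A, 0 ≤ g (star y * y)) (hg1 : g 1 = 1)
    (t : ℝ) (ht0 : 0 < t) (ht1 : t < 1)
    (hcomb : χ = (t : ℂ) • f + ((1 : ℂ) - (t : ℂ)) • g) :
    f = χ ∧ g = χ := by
  have hχ1 : χ 1 = 1 := by
    have h := hmul 1 1
    rw [mul_one] at h
    have h2 : χ 1 * (χ 1 - 1) = 0 := by linear_combination -h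
    rcases mul_eq_zero.mp h2 with h0 | h1
    · exfalso
      apply hne
      ext x
      have hx : χ x = χ x * χ 1 := by rw [← hmul, mul_one]
      rw [h0, mul_zero] at hx
      simpa using hx
    · linear_combination h1
  have main : ∀ x : A, f x = χ x ∧ g x = χ x := by
    intro x
    set y := x - χ x • (1 : A) with hy
    have hχy : χ y = 0 := by
      simp [hy, map_sub, map_smul, hχ1]
    have hχyy : χ (star y * y) = 0 := by
      rw [hmul, hχy, mul_zero]
    have hsum : (t : ℂ) * f (star y * y) + (1 - (t : ℂ)) * g (star y * y) = 0 := by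
      have h := congrArg (fun φ : A →ₗ[ℂ] ℂ => φ (star y * y)) hcomb
      simp only [LinearMap.add_apply, LinearMap.smul_apply, smul_eq_mul] at h
      rw [hχyy] at h
      linear_combination -h
    -- each term is zero
    obtain ⟨hfre, hfim⟩ := Complex.nonneg_iff.mp (hfpos y)
    obtain ⟨hgre, hgim⟩ := Complex.nonneg_iff.mp (hgpos y)
    have hre0 : t * (f (star y * y)).re + (1 - t) * (g (star y * y)).re = 0 := by
      have h := congrArg Complex.re hsum
      rw [Complex.add_re, Complex.mul_re, Complex.mul_re, Complex.zero_re,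
        Complex.sub_re, Complex.sub_im, Complex.one_re, Complex.one_im,
        Complex.ofReal_re, Complex.ofReal_im, ← hfim, ← hgim] at h
      linarith [h]
    have hfz : f (star y * y) = 0 := by
      have : (f (star y * y)).re = 0 := by nlinarith [mul_nonneg ht0.le hfre, mul_nonneg (by linarith : (0:ℝ) ≤ 1 - t) hgre]
      exact Complex.ext this hfim.symm
    have hgz : g (star y * y) = 0 := by
      have : (g (star y * y)).re = 0 := by nlinarith [mul_nonneg ht0.le hfre, mul_nonneg (by linarith : (0:ℝ) ≤ 1 - t) hgre]
      exact Complex.ext this hgim.symm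
    have hfy : f y = 0 := pos_vanish_aux f hfpos hf1 y hfz
    have hgy : g y = 0 := pos_vanish_aux g hgpos hg1 y hgz
    constructor
    · have h2 : f y = f x - χ x * f 1 := by
        rw [hy, map_sub, map_smul, smul_eq_mul]
      rw [hfy, hf1, mul_one] at h2
      linear_combination -h2
    · have h2 : g y = g x - χ x * g 1 := by
        rw [hy, map_sub, map_smul, smul_eq_mul]
      rw [hgy, hg1, mul_one] at h2
      linear_combination -h2
  constructor
  · ext x; exact (main x).1
  · ext x; exact (main x).2
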